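/- Every absolutely Bell-CHSH local Werner state belongs to ACVENN: if p ∈ [0, 1/√2], then the Werner state σ_p satisfies S(σ_p) ≥ 1, and hence σ_p ∈ ACVENN. -/

import Mathlib

open Matrix Finset
open scoped Kronecker ComplexOrder Classical

noncomputable section

/-- A quantum state: positive semidefinite matrix of trace 1. -/
def IsState {n : ℕ} (ρ : Matrix (Fin n) (Fin n) ℂ) : Prop :=
  ρ.PosSemidef ∧ ρ.trace = 1

/-- Von Neumann entropy `S(ρ) = -∑ᵢ λᵢ log₂ λᵢ` over the eigenvalues of `ρ`
(with the convention `0 · log₂ 0 = 0`, which holds since `Real.logb 2 0 = 0`). -/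
noncomputable def vnEntropy {n : ℕ} (ρ : Matrix (Fin n) (Fin n) ℂ) : ℝ :=
  if h : ρ.IsHermitian then -∑ i, h.eigenvalues i * Real.logb 2 (h.eigenvalues i) else 0

/-- Reduced state `ρ_A`: partial trace over the second tensor factor,
using the ordered product basis `|00⟩,|01⟩,|10⟩,|11⟩`, i.e. `|ab⟩ ↦ 2a+b`. -/
def ptraceB (ρ : Matrix (Fin 4) (Fin 4) ℂ) : Matrix (Fin 2) (Fin 2) ℂ :=
  Matrix.of fun i j => ∑ k : Fin 2,
    ρ ⟨2 * i.val + k.val, by omega⟩ ⟨2 * j.val + k.val, by omega⟩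

/-- Reduced state `ρ_B`: partial trace over the first tensor factor. -/
def ptraceA (ρ : Matrix (Fin 4) (Fin 4) ℂ) : Matrix (Fin 2) (Fin 2) ℂ :=
  Matrix.of fun i j => ∑ k : Fin 2,
    ρ ⟨2 * k.val + i.val, by omega⟩ ⟨2 * k.val + j.val, by omega⟩

/-- Conditional von Neumann entropy `S(A|B) = S(ρ_AB) - S(ρ_A)`. -/
def condEntropy (ρ : Matrix (Fin 4) (Fin 4) ℂ) : ℝ :=
  vnEntropy ρ - vnEntropy (ptraceB ρ)

/-- Rank-one projector `|v⟩⟨v|`. -/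
def proj (v : Fin 4 → ℂ) : Matrix (Fin 4) (Fin 4) ℂ := Matrix.vecMulVec v (star v)

/-- The Bell basis `|φ⁺⟩, |φ⁻⟩, |ψ⁺⟩, |ψ⁻⟩`. -/
noncomputable def bell : Fin 4 → Fin 4 → ℂ :=
  ![![(Real.sqrt 2 : ℂ)⁻¹, 0, 0, (Real.sqrt 2 : ℂ)⁻¹],
    ![(Real.sqrt 2 : ℂ)⁻¹, 0, 0, -(Real.sqrt 2 : ℂ)⁻¹],
    ![0, (Real.sqrt 2 : ℂ)⁻¹, (Real.sqrt 2 : ℂ)⁻¹, 0],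
    ![0, (Real.sqrt 2 : ℂ)⁻¹, -(Real.sqrt 2 : ℂ)⁻¹, 0]]

/-- Kronecker product of two one-qubit matrices as a `4 × 4` matrix,
with the index identification `(a,b) ↦ 2a+b`. -/
def kron (A B : Matrix (Fin 2) (Fin 2) ℂ) : Matrix (Fin 4) (Fin 4) ℂ :=
  Matrix.reindex finProdFinEquiv finProdFinEquiv (A ⊗ₖ B)

/-- The Werner state `σ_p = p|φ⁺⟩⟨φ⁺| + (1-p) I₄/4`. -/
noncomputable def werner (p : ℝ) : Matrix (Fin 4) (Fin 4) ℂ :=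
  (p : ℂ) • proj (bell 0) + (((1 - p) / 4 : ℝ) : ℂ) • 1

/-! ### Auxiliary lemmas -/

open Polynomial in
lemma charpoly_conj_aux {n : ℕ} (P Q A : Matrix (Fin n) (Fin n) ℂ)
    (hPQ : P * Q = 1) : (P * A * Q).charpoly = A.charpoly := by
  have hQP : Q * P = 1 := mul_eq_one_comm.mp hPQ
  have hmap : ∀ M N : Matrix (Fin n) (Fin n) ℂ,
      (M * N).map (Polynomial.C : ℂ →+* ℂ[X]) = M.map C * N.map C := by
    intro M N; exact Matrix.map_mul
  have key : charmatrix (P * A * Q) = P.map C * charmatrix A * Q.map C := by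
    unfold charmatrix
    rw [mul_sub, sub_mul]
    congr 1
    · have : (Matrix.scalar (Fin n) (X : ℂ[X])) = (X : ℂ[X]) • (1 : Matrix (Fin n) (Fin n) ℂ[X]) := by
        simp [Matrix.scalar_apply, Matrix.smul_one_eq_diagonal]
      rw [this, Matrix.mul_smul, mul_one, Matrix.smul_mul, ← hmap, hPQ]
      simp [Matrix.smul_one_eq_diagonal]
    · simp only [RingHom.mapMatrix_apply]
      rw [← hmap, ← hmap]
  unfold Matrix.charpoly
  rw [key, Matrix.det_mul, Matrix.det_mul, mul_comm, ← mul_assoc, ← Matrix.det_mul, ← hmap, hQP]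
  simp

open Polynomial in
lemma charpoly_diag {n : ℕ} (d : Fin n → ℂ) :
    (Matrix.diagonal d).charpoly
      = (Multiset.map (fun a => X - C a) (Finset.univ.val.map d)).prod := by
  unfold Matrix.charpoly
  have : charmatrix (Matrix.diagonal d) = Matrix.diagonal (fun i => (X : ℂ[X]) - C (d i)) := by
    ext i j
    by_cases h : i = j
    · subst h; simp
    · simp [h, Matrix.diagonal_apply_ne _ h]
  rw [this, Matrix.det_diagonal]
  rw [Multiset.map_map, ← Finset.prod_eq_multiset_prod]
  rfl

open Polynomial in
lemma roots_diag {n : ℕ} (d : Fin n → ℂ) :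
    (Matrix.diagonal d).charpoly.roots = Finset.univ.val.map d := by
  rw [charpoly_diag, Polynomial.roots_multiset_prod_X_sub_C]

lemma eig_roots {n : ℕ} {A : Matrix (Fin n) (Fin n) ℂ} (hA : A.IsHermitian) :
    A.charpoly.roots = Finset.univ.val.map (fun i => (hA.eigenvalues i : ℂ)) := by
  have hU : (hA.eigenvectorUnitary : Matrix (Fin n) (Fin n) ℂ) *
      (star (hA.eigenvectorUnitary : Matrix (Fin n) (Fin n) ℂ)) = 1 :=
    Matrix.mem_unitaryGroup_iff.mp hA.eigenvectorUnitary.2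
  have h1 : A.charpoly
      = (Matrix.diagonal ((RCLike.ofReal : ℝ → ℂ) ∘ hA.eigenvalues)).charpoly := by
    conv_lhs => rw [hA.spectral_theorem]
    exact charpoly_conj_aux _ _ _ hU
  rw [h1, roots_diag]
  rfl

lemma eig_sum {n : ℕ} {A : Matrix (Fin n) (Fin n) ℂ} (hA : A.IsHermitian) (d : Fin n → ℝ)
    (h : A.charpoly.roots = Finset.univ.val.map (fun i => ((d i : ℝ) : ℂ))) (f : ℝ → ℝ) :
    ∑ i, f (hA.eigenvalues i) = ∑ i, f (d i) := by
  have h2 : Multiset.map hA.eigenvalues Finset.univ.val = Multiset.map d Finset.univ.val := by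
    apply Multiset.map_injective (f := (Complex.ofReal : ℝ → ℂ)) Complex.ofReal_injective
    rw [Multiset.map_map, Multiset.map_map]
    rw [eig_roots hA] at h
    exact h
  have e1 : ∑ i, f (hA.eigenvalues i)
      = (Multiset.map f (Multiset.map hA.eigenvalues Finset.univ.val)).sum := by
    rw [Multiset.map_map]; rfl
  have e2 : ∑ i, f (d i) = (Multiset.map f (Multiset.map d Finset.univ.val)).sum := by
    rw [Multiset.map_map]; rfl
  rw [e1, e2, h2]

/-- The Bell unitary (columns are the Bell vectors). -/
noncomputable def BU : Matrix (Fin 4) (Fin 4) ℂ := Matrix.of fun i j => bell j i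

/-- The eigenvalues of the Werner state. -/
noncomputable def wdiag (p : ℝ) : Fin 4 → ℝ := ![(1+3*p)/4, (1-p)/4, (1-p)/4, (1-p)/4]

lemma sq_s : (Real.sqrt 2 : ℂ)⁻¹ * (Real.sqrt 2 : ℂ)⁻¹ = 1/2 := by
  rw [← mul_inv]; norm_cast; rw [Real.mul_self_sqrt (by norm_num)]; norm_num

lemma conj_s : (starRingEnd ℂ) (Real.sqrt 2 : ℂ)⁻¹ = (Real.sqrt 2 : ℂ)⁻¹ := by
  rw [map_inv₀, Complex.conj_ofReal]

lemma BU_unitary : BU * BUᴴ = 1 := by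
  ext i j
  fin_cases i <;> fin_cases j <;>
    simp [BU, bell, Matrix.mul_apply, Fin.sum_univ_four, Matrix.conjTranspose_apply, conj_s,
      Matrix.one_apply, Matrix.vecHead, Matrix.vecTail] <;>
    (try ring_nf) <;> (try simp [pow_two, sq_s, conj_s]) <;> (try norm_num)

lemma werner_diag (p : ℝ) :
    werner p = BU * Matrix.diagonal (fun i => ((wdiag p i : ℝ) : ℂ)) * BUᴴ := by
  ext i j
  fin_cases i <;> fin_cases j <;>
    simp [werner, proj, BU, bell, wdiag, Matrix.mul_apply, Fin.sum_univ_four,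
      Matrix.conjTranspose_apply, conj_s, Matrix.one_apply, Matrix.vecHead, Matrix.vecTail,
      Matrix.vecMulVec_apply, Matrix.diagonal, -Matrix.cons_vecMulVec, -Matrix.vecMulVec_cons] <;>
    (try push_cast) <;> (try ring_nf) <;> (try simp [pow_two, sq_s, conj_s]) <;>
    (try push_cast) <;> (try ring_nf)

lemma werner_roots (p : ℝ) :
    (werner p).charpoly.roots = Finset.univ.val.map (fun i => ((wdiag p i : ℝ) : ℂ)) := by
  rw [werner_diag p, charpoly_conj_aux _ _ _ BU_unitary, roots_diag]

/-! ### Numeric estimates -/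

lemma exp2_lt : Real.exp 2 < 7.3890561 := by
  have h := Real.exp_one_lt_d9
  have h2 : Real.exp 2 = Real.exp 1 * Real.exp 1 := by
    rw [← Real.exp_add]; norm_num
  nlinarith [Real.exp_pos 1]

lemma sqrt2_bounds : 1.41421356 < Real.sqrt 2 ∧ Real.sqrt 2 < 1.41421357 := by
  have h := Real.sq_sqrt (by norm_num : (2:ℝ) ≥ 0)
  have hpos := Real.sqrt_nonneg 2
  constructor <;> nlinarith

lemma log_bound_b {b : ℝ} (hb : 0 < b) : Real.log b ≤ b * Real.exp 2 - 3 := by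
  have h := Real.log_le_sub_one_of_pos (show 0 < b * Real.exp 2 by positivity)
  rw [Real.log_mul (ne_of_gt hb) (ne_of_gt (Real.exp_pos 2)), Real.log_exp] at h
  linarith

lemma werner_entropy_ineq {p : ℝ} (h0 : 0 ≤ p) (h1 : p ≤ 1 / Real.sqrt 2) :
    Real.log 2 ≤ -((1+3*p)/4 * Real.log ((1+3*p)/4) + 3 * ((1-p)/4 * Real.log ((1-p)/4))) := by
  obtain ⟨hs1, hs2⟩ := sqrt2_bounds
  have hsp : (0:ℝ) < Real.sqrt 2 := by linarith
  have hp' : p ≤ 0.70710679 := by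
    have : 1 / Real.sqrt 2 ≤ 0.70710679 := by
      rw [div_le_iff₀ hsp]; nlinarith
    linarith
  set a : ℝ := (1+3*p)/4 with ha_def
  set b : ℝ := (1-p)/4 with hb_def
  have hab : a = 1 - 3*b := by rw [ha_def, hb_def]; ring
  have hb0 : 0 < b := by rw [hb_def]; nlinarith
  have hbl : 0.0732233 ≤ b := by rw [hb_def]; nlinarith
  have hbu : b ≤ 1/4 := by rw [hb_def]; nlinarith
  have ha0 : 0 < a := by rw [ha_def]; nlinarith
  have la : Real.log a ≤ a - 1 := Real.log_le_sub_one_of_pos ha0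
  have lb : Real.log b ≤ b * Real.exp 2 - 3 := log_bound_b hb0
  have ta : a * Real.log a ≤ a * (a - 1) := by nlinarith
  have tb : b * Real.log b ≤ b * (b * Real.exp 2 - 3) := by nlinarith
  have he := exp2_lt
  have hep := Real.exp_pos 2
  have hl2 := Real.log_two_lt_d9
  nlinarith [mul_nonneg (sub_nonneg.2 hbl) (sub_nonneg.2 hbu),
    mul_nonneg (le_of_lt hb0) (le_of_lt hb0),
    mul_nonneg (mul_nonneg (le_of_lt hb0) (le_of_lt hb0)) (le_of_lt (sub_pos.2 he))]

lemma pointwise_ent {t : ℝ} (ht : 0 ≤ t) : t - 1/2 - t * Real.log 2 ≤ t * Real.log t := by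
  rcases eq_or_lt_of_le ht with h | h
  · simp [← h]
  · have h2t : (0:ℝ) < 2*t := by linarith
    have key := Real.log_le_sub_one_of_pos (show (0:ℝ) < (2*t)⁻¹ by positivity)
    rw [Real.log_inv] at key
    have hlog : Real.log (2*t) = Real.log 2 + Real.log t :=
      Real.log_mul (by norm_num) (ne_of_gt h)
    have hinv : (2*t) * (2*t)⁻¹ = 1 := mul_inv_cancel₀ (ne_of_gt h2t)
    nlinarith [mul_le_mul_of_nonneg_left key (le_of_lt h2t)]

lemma binary_entropy_le {e0 e1 : ℝ} (h0 : 0 ≤ e0) (h1 : 0 ≤ e1) (hsum : e0 + e1 = 1) :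
    -(e0 * Real.log e0 + e1 * Real.log e1) ≤ Real.log 2 := by
  have p0 := pointwise_ent h0
  have p1 := pointwise_ent h1
  have hl : e0 * Real.log 2 + e1 * Real.log 2 = Real.log 2 := by
    rw [← add_mul, hsum, one_mul]
  linarith

/-! ### Partial trace lemmas -/

lemma ptraceB_posSemidef {ρ : Matrix (Fin 4) (Fin 4) ℂ} (hρ : ρ.PosSemidef) :
    (ptraceB ρ).PosSemidef := by
  rw [Matrix.posSemidef_iff_dotProduct_mulVec]
  constructor
  · ext i j
    have h := hρ.1
    have happ : ∀ x y, (starRingEnd ℂ) (ρ y x) = ρ x y := by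
      intro x y
      have := congrFun (congrFun h x) y
      simpa [Matrix.conjTranspose_apply] using this
    fin_cases i <;> fin_cases j <;>
      simp [ptraceB, Matrix.conjTranspose_apply, Fin.sum_univ_two, happ]
  · intro v
    have key : dotProduct (star v) (ptraceB ρ *ᵥ v)
        = dotProduct (star ![v 0, 0, v 1, 0]) (ρ *ᵥ ![v 0, 0, v 1, 0])
          + dotProduct (star ![0, v 0, 0, v 1]) (ρ *ᵥ ![0, v 0, 0, v 1]) := by
      simp [dotProduct, Matrix.mulVec, ptraceB, Fin.sum_univ_two, Fin.sum_univ_four]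
      (try ring_nf)
      (try rfl)
    rw [key]
    exact add_nonneg (hρ.dotProduct_mulVec_nonneg _) (hρ.dotProduct_mulVec_nonneg _)

lemma ptraceB_trace (ρ : Matrix (Fin 4) (Fin 4) ℂ) : (ptraceB ρ).trace = ρ.trace := by
  simp [Matrix.trace, ptraceB, Fin.sum_univ_two, Fin.sum_univ_four]
  (try norm_num)
  (try ring_nf)
  (try rfl)

/-! ### Main theorem -/

/-- Every absolutely Bell-CHSH local Werner state (`p ∈ [0, 1/√2]`)
satisfies `S(σ_p) ≥ 1`, hence belongs to ACVENN. -/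
theorem stmt_16 (p : ℝ) (hp : p ∈ Set.Icc (0 : ℝ) (1 / Real.sqrt 2)) :
    1 ≤ vnEntropy (werner p) ∧
    (IsState (werner p) ∧
      ∀ U ∈ Matrix.unitaryGroup (Fin 4) ℂ, 0 ≤ condEntropy (U * werner p * Uᴴ)) := by
  obtain ⟨hp0, hp1⟩ := hp
  obtain ⟨hs1, hs2⟩ := sqrt2_bounds
  have hsp : (0:ℝ) < Real.sqrt 2 := by linarith
  have hple : p ≤ 1 := by
    have : 1 / Real.sqrt 2 ≤ 1 := by
      rw [div_le_one hsp]; linarith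
    linarith
  have hlog2 : 0 < Real.log 2 := Real.log_pos (by norm_num)
  -- werner is a state
  have hwd_nonneg : ∀ i, 0 ≤ wdiag p i := by
    intro i
    fin_cases i <;> simp [wdiag] <;> linarith
  have hdiagPSD : (Matrix.diagonal (fun i => ((wdiag p i : ℝ) : ℂ))).PosSemidef := by
    refine Matrix.PosSemidef.diagonal ?_
    intro i
    show (0:ℂ) ≤ ((wdiag p i : ℝ) : ℂ)
    rw [Complex.zero_le_real]
    exact hwd_nonneg i
  have hwPSD : (werner p).PosSemidef := by
    rw [werner_diag p]
    exact hdiagPSD.mul_mul_conjTranspose_same BU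
  have hwH : (werner p).IsHermitian := hwPSD.1
  have hBU2 : BUᴴ * BU = 1 := mul_eq_one_comm.mp BU_unitary
  have hwtr : (werner p).trace = 1 := by
    rw [werner_diag p, Matrix.trace_mul_cycle, hBU2, Matrix.one_mul,
      Matrix.trace_diagonal, Fin.sum_univ_four]
    simp [wdiag]
    push_cast
    ring
  have hwState : IsState (werner p) := ⟨hwPSD, hwtr⟩
  -- generic entropy computation for matrices similar to werner
  have hEnt : ∀ (A : Matrix (Fin 4) (Fin 4) ℂ), A.IsHermitian →
      A.charpoly.roots = Finset.univ.val.map (fun i => ((wdiag p i : ℝ) : ℂ)) →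
      1 ≤ vnEntropy A := by
    intro A hA hroots
    rw [vnEntropy, dif_pos hA]
    have := eig_sum hA (wdiag p) hroots (fun x => x * Real.logb 2 x)
    rw [this, Fin.sum_univ_four]
    have hw0 : wdiag p 0 = (1+3*p)/4 := rfl
    have hw1 : wdiag p 1 = (1-p)/4 := rfl
    have hw2 : wdiag p 2 = (1-p)/4 := rfl
    have hw3 : wdiag p 3 = (1-p)/4 := rfl
    rw [hw0, hw1, hw2, hw3]
    have key := werner_entropy_ineq hp0 hp1
    simp only [Real.logb]
    have heq : -((1+3*p)/4 * (Real.log ((1+3*p)/4) / Real.log 2)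
        + (1-p)/4 * (Real.log ((1-p)/4) / Real.log 2)
        + (1-p)/4 * (Real.log ((1-p)/4) / Real.log 2)
        + (1-p)/4 * (Real.log ((1-p)/4) / Real.log 2))
        = (-((1+3*p)/4 * Real.log ((1+3*p)/4) + 3 * ((1-p)/4 * Real.log ((1-p)/4))))
          / Real.log 2 := by
      field_simp
      ring
    rw [heq, le_div_iff₀ hlog2, one_mul]
    linarith
  have h1 : 1 ≤ vnEntropy (werner p) := hEnt _ hwH (werner_roots p)
  refine ⟨h1, hwState, ?_⟩
  intro U hU
  have hUU : U * Uᴴ = 1 := by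
    have := Matrix.mem_unitaryGroup_iff.mp hU
    rwa [Matrix.star_eq_conjTranspose] at this
  set A := U * werner p * Uᴴ with hA_def
  have hAPSD : A.PosSemidef := hwPSD.mul_mul_conjTranspose_same U
  have hAH : A.IsHermitian := hAPSD.1
  have hAroots : A.charpoly.roots = Finset.univ.val.map (fun i => ((wdiag p i : ℝ) : ℂ)) := by
    rw [hA_def, charpoly_conj_aux _ _ _ hUU, werner_roots p]
  have hA1 : 1 ≤ vnEntropy A := hEnt _ hAH hAroots
  -- the reduced state
  have hBPSD : (ptraceB A).PosSemidef := ptraceB_posSemidef hAPSD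
  have hBH : (ptraceB A).IsHermitian := hBPSD.1
  have hAtr : A.trace = 1 := by
    rw [hA_def, Matrix.trace_mul_cycle,
      mul_eq_one_comm.mp hUU, Matrix.one_mul, hwtr]
  have hBtr : (ptraceB A).trace = 1 := by rw [ptraceB_trace, hAtr]
  -- eigenvalues of the reduced state
  have hsum : hBH.eigenvalues 0 + hBH.eigenvalues 1 = 1 := by
    have htr := Matrix.trace_eq_sum_roots_charpoly (A := ptraceB A)
    rw [eig_roots hBH, hBtr] at htr
    have : (1:ℂ) = ((hBH.eigenvalues 0 + hBH.eigenvalues 1 : ℝ) : ℂ) := by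
      rw [htr]
      rw [show (Finset.univ.val : Multiset (Fin 2)) = {0, 1} from rfl]
      push_cast
      simp [Multiset.map_cons, Multiset.sum_cons]
    exact_mod_cast this.symm
  have he0 : 0 ≤ hBH.eigenvalues 0 := hBPSD.eigenvalues_nonneg 0
  have he1 : 0 ≤ hBH.eigenvalues 1 := hBPSD.eigenvalues_nonneg 1
  have hBent : vnEntropy (ptraceB A) ≤ 1 := by
    rw [vnEntropy, dif_pos hBH, Fin.sum_univ_two]
    have key := binary_entropy_le he0 he1 hsum
    simp only [Real.logb]
    have heq : -(hBH.eigenvalues 0 * (Real.log (hBH.eigenvalues 0) / Real.log 2)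
        + hBH.eigenvalues 1 * (Real.log (hBH.eigenvalues 1) / Real.log 2))
        = (-(hBH.eigenvalues 0 * Real.log (hBH.eigenvalues 0)
            + hBH.eigenvalues 1 * Real.log (hBH.eigenvalues 1))) / Real.log 2 := by
      field_simp
    rw [heq, div_le_one hlog2]
    linarith
  rw [condEntropy]
  linarith
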